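/- For all integers k ≥ 1 and r ≥ 2, the sum of all edge weights of the weighted directed graph L_{k,r} is at most 2k(r+1)r^{k−1}. -/

import Mathlib

open Finset

namespace TSPGap


/-! ### Lovász–Schrijver lift-and-project operators -/

/-- `cone(R) = {(λ, λx) : λ ≥ 0, x ∈ R}`, with the extra 0th coordinate first. -/
def lsCone {ι : Type*} (R : Set (ι → ℝ)) : Set (ℝ × (ι → ℝ)) :=
  {p | ∃ c : ℝ, ∃ y ∈ R, 0 ≤ c ∧ p.1 = c ∧ p.2 = fun i => c * y i}

/-- `X` is a protection matrix witnessing `x ∈ N(R)`: it is symmetric, its 0th row and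
diagonal both equal `(1, x)`, and each row `X_i` and difference `X_0 - X_i` lies in `cone(R)`. -/
def IsProtection {ι : Type*} (R : Set (ι → ℝ)) (x : ι → ℝ)
    (X : Option ι → Option ι → ℝ) : Prop :=
  (∀ i j, X i j = X j i) ∧
  X none none = 1 ∧
  (∀ i, X none (some i) = x i) ∧
  (∀ i, X (some i) (some i) = x i) ∧
  (∀ i, (X (some i) none, fun j => X (some i) (some j)) ∈ lsCone R) ∧
  (∀ i, (X none none - X (some i) none,
         fun j => X none (some j) - X (some i) (some j)) ∈ lsCone R)

/-- The Lovász–Schrijver `N` operator. -/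
def lsN {ι : Type*} (R : Set (ι → ℝ)) : Set (ι → ℝ) :=
  {x | ∃ X : Option ι → Option ι → ℝ, IsProtection R x X}

/-- The Lovász–Schrijver `N₊` operator (protection matrix additionally PSD). -/
def lsNplus {ι : Type*} [Fintype ι] (R : Set (ι → ℝ)) : Set (ι → ℝ) :=
  {x | ∃ X : Matrix (Option ι) (Option ι) ℝ, X.PosSemidef ∧
        IsProtection R x (fun i j => X i j)}

/-! ### Directed graphs -/

variable {V : Type*} [DecidableEq V]

/-- The list of (directed) steps of a walk given by its list of vertices. -/
def dSteps (l : List V) : List (V × V) := l.zip l.tail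

/-- The steps of a closed walk given by its list of vertices. -/
def cycSteps (l : List V) : List (V × V) := l.zip (l.rotate 1)

/-- `l` is a directed walk from `u` to `v` using edges of `E`. -/
def IsDWalk (E : Finset (V × V)) (u v : V) (l : List V) : Prop :=
  l.head? = some u ∧ l.getLast? = some v ∧ ∀ a ∈ dSteps l, a ∈ E

/-- Total weight of a walk. -/
def dWalkWeight (w : V × V → ℝ) (l : List V) : ℝ := ((dSteps l).map w).sum

/-- Shortest-path distance from `u` to `v` in the weighted directed graph `(E, w)`. -/
noncomputable def dDist (E : Finset (V × V)) (w : V × V → ℝ) (u v : V) : ℝ :=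
  sInf {c | ∃ l : List V, IsDWalk E u v l ∧ dWalkWeight w l = c}

/-- `x(δ⁺(S))`. -/
def outCut (E : Finset (V × V)) (x : ↥E → ℝ) (S : Finset V) : ℝ :=
  ∑ e ∈ E.attach.filter (fun e => e.val.1 ∈ S ∧ e.val.2 ∉ S), x e

/-- `x(δ⁻(S))`. -/
def inCut (E : Finset (V × V)) (x : ↥E → ℝ) (S : Finset V) : ℝ :=
  ∑ e ∈ E.attach.filter (fun e => e.val.1 ∉ S ∧ e.val.2 ∈ S), x e

/-- `d · x = ∑_e d_e x_e` over the edge set `E`. -/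
def dDot (E : Finset (V × V)) (d : V × V → ℝ) (x : ↥E → ℝ) : ℝ :=
  ∑ e ∈ E.attach, d e.val * x e

/-- The balanced asymmetric tour polytope of the directed graph with node set `VS`
and edge set `E`. -/
def ATbal (VS : Finset V) (E : Finset (V × V)) : Set (↥E → ℝ) :=
  {x | (∀ e, 0 ≤ x e ∧ x e ≤ 1) ∧
       (∀ S : Finset V, S ⊆ VS → S.Nonempty → S ≠ VS →
          1 ≤ outCut E x S ∧ 1 ≤ inCut E x S) ∧
       (∀ v ∈ VS, outCut E x {v} = inCut E x {v})}

/-- Indicator vectors of Hamiltonian cycles (on node set `VS`) among edges `E`. -/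
def hamCycleVecs (VS : Finset V) (E : Finset (V × V)) : Set (↥E → ℝ) :=
  {x | ∃ c : List V, 2 ≤ c.length ∧ c.Nodup ∧ c.toFinset = VS ∧
        (∀ a ∈ cycSteps c, a ∈ E) ∧
        ∀ e : ↥E, x e = if e.val ∈ cycSteps c then 1 else 0}

/-- Edge set of the complete directed graph on the node set `VS` (no self-loops). -/
def dComplete (VS : Finset V) : Finset (V × V) := (VS ×ˢ VS).filter (fun e => e.1 ≠ e.2)

/-- Edge set of the complete directed graph on all of `V` (no self-loops). -/
def dCompleteAll (V : Type*) [Fintype V] [DecidableEq V] : Finset (V × V) :=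
  Finset.univ.filter (fun e => e.1 ≠ e.2)

/-- Out-degree of `v` in edge set `E`. -/
def outDeg (E : Finset (V × V)) (v : V) : ℕ := (E.filter (fun e => e.1 = v)).card

/-- In-degree of `v` in edge set `E`. -/
def inDeg (E : Finset (V × V)) (v : V) : ℕ := (E.filter (fun e => e.2 = v)).card

/-- A frame for the edge `e = (u,v)`: a set `F ⊆ E \ {e}` consisting of an edge-simple
path from `u` to `v` together with zero or more edge-simple cycles, all pairwise
edge-disjoint. -/
def IsFrame (E : Finset (V × V)) (e : V × V) (F : Finset (V × V)) : Prop :=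
  F ⊆ E.erase e ∧
  ∃ (p : List V) (cs : List (List V)),
    p.head? = some e.1 ∧ p.getLast? = some e.2 ∧ (∀ a ∈ dSteps p, a ∈ E) ∧
    (∀ c ∈ cs, c ≠ [] ∧ ∀ a ∈ cycSteps c, a ∈ E) ∧
    (dSteps p ++ (cs.map cycSteps).flatten).Nodup ∧
    F = (dSteps p ++ (cs.map cycSteps).flatten).toFinset

/-- There exist two edge-disjoint directed (simple) paths from `u` to `v` in `E`. -/
def TwoEdgeDisjointPaths (E : Finset (V × V)) (u v : V) : Prop :=
  ∃ p q : List V, p.Nodup ∧ q.Nodup ∧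
    p.head? = some u ∧ p.getLast? = some v ∧
    q.head? = some u ∧ q.getLast? = some v ∧
    (∀ a ∈ dSteps p, a ∈ E) ∧ (∀ a ∈ dSteps q, a ∈ E) ∧
    (dSteps p).Disjoint (dSteps q)




/-! ### The Charikar–Goemans–Karloff graphs -/

/-- Vertex type housing the graph `G_{k,r}` (index `k = 0` is a dummy level). -/
def CGKV : ℕ → Type
  | 0 => PUnit
  | 1 => ℕ
  | k + 2 => (ℕ × CGKV (k + 1)) ⊕ Fin 2

instance CGKV.decEq : (k : ℕ) → DecidableEq (CGKV k)
  | 0 => inferInstanceAs (DecidableEq PUnit)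
  | 1 => inferInstanceAs (DecidableEq ℕ)
  | k + 2 =>
      letI : DecidableEq (CGKV (k + 1)) := CGKV.decEq (k + 1)
      inferInstanceAs (DecidableEq ((ℕ × CGKV (k + 1)) ⊕ Fin 2))

/-- The source of `G_{k,r}`. -/
def CGKsrc (r : ℕ) : (k : ℕ) → CGKV k
  | 0 => PUnit.unit
  | 1 => (0 : ℕ)
  | _ + 2 => Sum.inr 0

/-- The sink of `G_{k,r}`. -/
def CGKsnk (r : ℕ) : (k : ℕ) → CGKV k
  | 0 => PUnit.unit
  | 1 => (r + 1 : ℕ)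
  | _ + 2 => Sum.inr 1

/-- The node set of `G_{k,r}`. -/
def CGKVS (r : ℕ) : (k : ℕ) → Finset (CGKV k)
  | 0 => ∅
  | 1 => Finset.range (r + 2)
  | k + 2 =>
      ((Finset.range r) ×ˢ CGKVS r (k + 1)).image Sum.inl ∪ {Sum.inr 0, Sum.inr 1}

/-- The edge set of `G_{k,r}`: at level 1, two oppositely-directed paths of `r+1` edges
on the nodes `0, …, r+1`; at level `k+2`, the edges of the `r` copies of `G_{k+1,r}`
together with a path from the source `s` through the copies' sources to the sink `t`,
and a path from `t` through the copies' sinks (in the opposite order) back to `s`. -/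
def CGKE (r : ℕ) : (k : ℕ) → Finset (CGKV k × CGKV k)
  | 0 => ∅
  | 1 => (dSteps (List.range (r + 2))).toFinset ∪
         (dSteps (List.range (r + 2)).reverse).toFinset
  | k + 2 =>
      (Finset.range r).biUnion
        (fun j => (CGKE r (k + 1)).image (fun e => (Sum.inl (j, e.1), Sum.inl (j, e.2)))) ∪
      (dSteps (Sum.inr 0 ::
        ((List.range r).map (fun j => Sum.inl (j, CGKsrc r (k + 1)))) ++ [Sum.inr 1])).toFinset ∪
      (dSteps (Sum.inr 1 ::
        (((List.range r).map (fun j => Sum.inl (j, CGKsnk r (k + 1)))).reverse) ++ [Sum.inr 0])).toFinset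

/-- Edge weights of `G_{k,r}` (and of `L_{k,r}`): level-`ℓ` edges have weight `r^(ℓ-1)`. -/
def CGKw (r : ℕ) : (k : ℕ) → CGKV k × CGKV k → ℝ
  | 0, _ => 0
  | 1, _ => 1
  | k + 2, e =>
      match e with
      | (Sum.inl (j, u), Sum.inl (j', v)) =>
          if j = j' then CGKw r (k + 1) (u, v) else (r : ℝ) ^ (k + 1)
      | _ => (r : ℝ) ^ (k + 1)

/-- `v₁`: the successor of `s` on the forward path of `G_{k,r}`. -/
def Lv1 (r : ℕ) : (k : ℕ) → CGKV k
  | 0 => PUnit.unit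
  | 1 => (1 : ℕ)
  | k + 2 => Sum.inl (0, CGKsrc r (k + 1))

/-- `v₂`: the predecessor of `t` on the forward path of `G_{k,r}`. -/
def Lv2 (r : ℕ) : (k : ℕ) → CGKV k
  | 0 => PUnit.unit
  | 1 => (r : ℕ)
  | k + 2 => Sum.inl (r - 1, CGKsrc r (k + 1))

/-- `v₃`: the successor of `t` on the backward path of `G_{k,r}`. -/
def Lv3 (r : ℕ) : (k : ℕ) → CGKV k
  | 0 => PUnit.unit
  | 1 => (r : ℕ)
  | k + 2 => Sum.inl (r - 1, CGKsnk r (k + 1))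

/-- `v₄`: the predecessor of `s` on the backward path of `G_{k,r}`. -/
def Lv4 (r : ℕ) : (k : ℕ) → CGKV k
  | 0 => PUnit.unit
  | 1 => (1 : ℕ)
  | k + 2 => Sum.inl (0, CGKsnk r (k + 1))

/-- The node set `V_{k,r}` of `L_{k,r}`: the nodes of `G_{k,r}` minus the two terminals. -/
def LVS (r k : ℕ) : Finset (CGKV k) :=
  ((CGKVS r k).erase (CGKsrc r k)).erase (CGKsnk r k)

/-- The edge set `E_{k,r}` of `L_{k,r}`: the edges of `G_{k,r}` not incident to a terminal,
plus the two new edges `(v₂,v₁)` and `(v₄,v₃)`. -/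
def LE (r k : ℕ) : Finset (CGKV k × CGKV k) :=
  (CGKE r k).filter (fun e =>
    e.1 ≠ CGKsrc r k ∧ e.1 ≠ CGKsnk r k ∧ e.2 ≠ CGKsrc r k ∧ e.2 ≠ CGKsnk r k) ∪
  {(Lv2 r k, Lv1 r k), (Lv4 r k, Lv3 r k)}



/-! ### Undirected graphs -/

variable {V : Type*} [DecidableEq V]

/-- The (undirected) steps of a walk given by its list of vertices. -/
def uSteps (l : List V) : List (Sym2 V) := (l.zip l.tail).map (fun p => Sym2.mk p.1 p.2)

/-- `l` is a walk from `u` to `v` in the undirected edge set `E`. -/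
def IsUWalk (E : Finset (Sym2 V)) (u v : V) (l : List V) : Prop :=
  l.head? = some u ∧ l.getLast? = some v ∧ ∀ e ∈ uSteps l, e ∈ E

/-- Whether the undirected edge `e` crosses the cut `(S, S̄)`. -/
def uCrosses (S : Finset V) (e : Sym2 V) : Bool :=
  Sym2.lift ⟨fun a b => xor (decide (a ∈ S)) (decide (b ∈ S)),
    fun a b => Bool.xor_comm _ _⟩ e

/-- `x(δ(S))`. -/
def uCut (E : Finset (Sym2 V)) (x : ↥E → ℝ) (S : Finset V) : ℝ :=
  ∑ e ∈ E.attach.filter (fun e => uCrosses S e.val), x e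

/-- `d · x = ∑_e d_e x_e` over the undirected edge set `E`. -/
def uDot (E : Finset (Sym2 V)) (d : Sym2 V → ℝ) (x : ↥E → ℝ) : ℝ :=
  ∑ e ∈ E.attach, d e.val * x e

/-- The symmetric tour polytope of the undirected graph with node set `VS`, edges `E`. -/
def STpoly (VS : Finset V) (E : Finset (Sym2 V)) : Set (↥E → ℝ) :=
  {x | (∀ e, 0 ≤ x e ∧ x e ≤ 1) ∧
       (∀ S : Finset V, S ⊆ VS → S.Nonempty → S ≠ VS → 2 ≤ uCut E x S) ∧
       (∀ v ∈ VS, uCut E x {v} = 2)}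

/-- The symmetric path polytope of the undirected graph with node set `VS`, edges `E`,
and endpoints `s`, `t`. -/
def SPpoly (VS : Finset V) (E : Finset (Sym2 V)) (s t : V) : Set (↥E → ℝ) :=
  {x | (∀ e, 0 ≤ x e ∧ x e ≤ 1) ∧
       (∀ S : Finset V, S ⊆ VS → S.Nonempty → S ≠ VS →
          (((s ∈ S) ↔ (t ∈ S)) → 2 ≤ uCut E x S) ∧
          (¬((s ∈ S) ↔ (t ∈ S)) → 1 ≤ uCut E x S)) ∧
       (∀ v ∈ VS, v ≠ s → v ≠ t → uCut E x {v} = 2) ∧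
       uCut E x {s} = 1 ∧ uCut E x {t} = 1}

/-- Indicator vectors of Hamiltonian paths from `s` to `t` (on node set `VS`) among
edges `E`. -/
def uHamPathVecs (VS : Finset V) (E : Finset (Sym2 V)) (s t : V) : Set (↥E → ℝ) :=
  {x | ∃ p : List V, p.Nodup ∧ p.toFinset = VS ∧
        p.head? = some s ∧ p.getLast? = some t ∧
        (∀ e ∈ uSteps p, e ∈ E) ∧
        ∀ e : ↥E, x e = if e.val ∈ uSteps p then 1 else 0}

/-- Edge set of the complete undirected graph on all of `V` (no self-loops). -/
def uCompleteAll (V : Type*) [Fintype V] [DecidableEq V] : Finset (Sym2 V) :=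
  Finset.univ.filter (fun e => ¬ e.IsDiag)

/-- Shortest-path distance (number of edges) between the endpoints of `e`, in the
unweighted undirected graph with edge set `E`. -/
noncomputable def uDist (E : Finset (Sym2 V)) (e : Sym2 V) : ℝ :=
  sInf {c | ∃ u v : V, e = s(u, v) ∧
    ∃ l : List V, IsUWalk E u v l ∧ ((uSteps l).length : ℝ) = c}

/-! ### Cheung's graphs -/

/-- The node set `V_{ℓ,q}` of Cheung's graph `G_{ℓ,q}`: a top path and a bottom path of
`ℓ+1` nodes each, a left and a right clique of `3q+3` nodes each, and nodes `s`, `t`. -/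
inductive ChV (l q : ℕ) where
  | top : Fin (l + 1) → ChV l q
  | bot : Fin (l + 1) → ChV l q
  | left : Fin (3 * q + 3) → ChV l q
  | right : Fin (3 * q + 3) → ChV l q
  | vs : ChV l q
  | vt : ChV l q
deriving DecidableEq, Fintype

/-- The edges of the two paths of `G_{ℓ,q}`. -/
def ChEpaths (l q : ℕ) : Finset (Sym2 (ChV l q)) :=
  (Finset.univ : Finset (Fin l)).image
    (fun i => s(ChV.top i.castSucc, ChV.top i.succ)) ∪
  (Finset.univ : Finset (Fin l)).image
    (fun i => s(ChV.bot i.castSucc, ChV.bot i.succ))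

/-- The edges within the two cliques of `G_{ℓ,q}`. -/
def ChEcliques (l q : ℕ) : Finset (Sym2 (ChV l q)) :=
  ((Finset.univ : Finset (Fin (3 * q + 3) × Fin (3 * q + 3))).filter
      (fun p => p.1 ≠ p.2)).image (fun p => s(ChV.left p.1, ChV.left p.2)) ∪
  ((Finset.univ : Finset (Fin (3 * q + 3) × Fin (3 * q + 3))).filter
      (fun p => p.1 ≠ p.2)).image (fun p => s(ChV.right p.1, ChV.right p.2))

/-- The connection edges of `G_{ℓ,q}`: path endpoints to the cliques, `s` to the left
clique, and `t` to the right clique. -/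
def ChEconn (l q : ℕ) : Finset (Sym2 (ChV l q)) :=
  (Finset.univ : Finset (Fin (3 * q + 3))).image (fun i => s(ChV.top 0, ChV.left i)) ∪
  (Finset.univ : Finset (Fin (3 * q + 3))).image (fun i => s(ChV.bot 0, ChV.left i)) ∪
  (Finset.univ : Finset (Fin (3 * q + 3))).image
    (fun i => s(ChV.top (Fin.last l), ChV.right i)) ∪
  (Finset.univ : Finset (Fin (3 * q + 3))).image
    (fun i => s(ChV.bot (Fin.last l), ChV.right i)) ∪
  (Finset.univ : Finset (Fin (3 * q + 3))).image (fun i => s(ChV.vs, ChV.left i)) ∪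
  (Finset.univ : Finset (Fin (3 * q + 3))).image (fun i => s(ChV.vt, ChV.right i))

/-- The edge set `E_{ℓ,q}` of Cheung's graph `G_{ℓ,q}`. -/
def ChE (l q : ℕ) : Finset (Sym2 (ChV l q)) :=
  ChEpaths l q ∪ ChEcliques l q ∪ ChEconn l q

/-- The node set of `G'_{ℓ,q}`: `G_{ℓ,q}` plus `ℓ-1` new internal path nodes. -/
inductive ChV' (l q : ℕ) where
  | old : ChV l q → ChV' l q
  | mid : Fin (l - 1) → ChV' l q
deriving DecidableEq, Fintype

/-- The new `s`–`t` path of `G'_{ℓ,q}` (as a list of nodes; it has `ℓ` edges). -/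
def ChPathList (l q : ℕ) : List (ChV' l q) :=
  ChV'.old ChV.vs :: ((List.finRange (l - 1)).map ChV'.mid ++ [ChV'.old ChV.vt])

/-- The edge set `E'_{ℓ,q}` of `G'_{ℓ,q}`: the (old) edges of `G_{ℓ,q}` together with the
`ℓ` new edges of a path from `s` to `t` through `ℓ-1` new nodes. -/
def ChE' (l q : ℕ) : Finset (Sym2 (ChV' l q)) :=
  (ChE l q).image (Sym2.map ChV'.old) ∪ (uSteps (ChPathList l q)).toFinset


/-! ### Auxiliary lemmas for statement 10 -/

private lemma sum_union_le' {α : Type*} [DecidableEq α] (s t : Finset α) (f : α → ℝ)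
    (hf : ∀ a, 0 ≤ f a) : ∑ a ∈ s ∪ t, f a ≤ ∑ a ∈ s, f a + ∑ a ∈ t, f a := by
  have h := Finset.sum_union_inter (s₁ := s) (s₂ := t) (f := f)
  have h2 : (0:ℝ) ≤ ∑ a ∈ s ∩ t, f a := Finset.sum_nonneg (fun a _ => hf a)
  linarith

private lemma sum_biUnion_le' {α β : Type*} [DecidableEq β] (s : Finset α) (t : α → Finset β)
    (f : β → ℝ) (hf : ∀ b, 0 ≤ f b) :
    ∑ b ∈ s.biUnion t, f b ≤ ∑ a ∈ s, ∑ b ∈ t a, f b := by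
  classical
  induction s using Finset.induction with
  | empty => simp
  | insert a s' h ih =>
    rw [Finset.biUnion_insert, Finset.sum_insert h]
    exact (sum_union_le' _ _ _ hf).trans (by linarith)

private lemma dSteps_cons₂ {V : Type*} (x y : V) (l : List V) :
    dSteps (x :: y :: l) = (x, y) :: dSteps (y :: l) := by
  simp [dSteps]

private lemma mem_dSteps_head {V : Type*} (x y : V) (l : List V) :
    (x, y) ∈ dSteps (x :: y :: l) := by
  rw [dSteps_cons₂]; exact List.mem_cons_self

private lemma mem_dSteps_last {V : Type*} (a b : V) (t : List V) :
    (a, b) ∈ dSteps (t ++ [a, b]) := by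
  induction t with
  | nil => simp [dSteps]
  | cons x t ih =>
    obtain ⟨c, rest, h⟩ := List.exists_cons_of_ne_nil (l := t ++ [a, b]) (by simp)
    rw [List.cons_append, h, dSteps_cons₂, ← h]
    exact List.mem_cons_of_mem _ ih

private lemma length_dSteps {V : Type*} (l : List V) :
    (dSteps l).length = l.length - 1 := by
  simp [dSteps]

private lemma CGKw_nonneg (r : ℕ) : ∀ k (e : CGKV k × CGKV k), 0 ≤ CGKw r k e
  | 0, _ => le_refl 0
  | 1, _ => zero_le_one
  | k+2, e => by
    rcases e with ⟨(⟨j, u⟩ | i), (⟨j', v⟩ | i')⟩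
    · simp only [CGKw]
      split
      · exact CGKw_nonneg r (k+1) _
      · positivity
    · simp only [CGKw]; positivity
    · simp only [CGKw]; positivity
    · simp only [CGKw]; positivity

private lemma CGKw_le (r : ℕ) (hr : 1 ≤ r) : ∀ k (e : CGKV (k+1) × CGKV (k+1)),
    CGKw r (k+1) e ≤ (r : ℝ) ^ k
  | 0, e => by simp [CGKw]
  | k+1, e => by
    have hr1 : (1:ℝ) ≤ (r:ℝ) := by exact_mod_cast hr
    rcases e with ⟨(⟨j, u⟩ | i), (⟨j', v⟩ | i')⟩
    · simp only [CGKw]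
      split
      · exact (CGKw_le r hr k _).trans (pow_le_pow_right₀ hr1 (Nat.le_succ k))
      · exact le_refl _
    · simp only [CGKw]; exact le_refl _
    · simp only [CGKw]; exact le_refl _
    · simp only [CGKw]; exact le_refl _

private lemma sum_dSteps_toFinset_le (r : ℕ) (hr : 1 ≤ r) (k : ℕ)
    (l : List (CGKV (k+1))) :
    ∑ e ∈ (dSteps l).toFinset, CGKw r (k+1) e ≤ ((l.length - 1 : ℕ) : ℝ) * (r:ℝ)^k := by
  calc ∑ e ∈ (dSteps l).toFinset, CGKw r (k+1) e
      ≤ (dSteps l).toFinset.card • ((r:ℝ)^k) :=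
        Finset.sum_le_card_nsmul _ _ _ (fun e _ => CGKw_le r hr k e)
    _ ≤ ((l.length - 1 : ℕ) : ℝ) * (r:ℝ)^k := by
        rw [nsmul_eq_mul]
        have h1 : (dSteps l).toFinset.card ≤ l.length - 1 :=
          (List.toFinset_card_le _).trans (le_of_eq (length_dSteps l))
        have h2 : (0:ℝ) ≤ (r:ℝ)^k := by positivity
        exact mul_le_mul_of_nonneg_right (by exact_mod_cast h1) h2

private lemma CGKE_sum_le (r : ℕ) (hr : 2 ≤ r) : ∀ k,
    ∑ e ∈ CGKE r (k+1), CGKw r (k+1) e ≤ 2 * ((k:ℝ)+1) * ((r:ℝ)+1) * (r:ℝ)^k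
  | 0 => by
    have h1 := sum_dSteps_toFinset_le r (by omega) 0 (List.range (r + 2))
    have h2 := sum_dSteps_toFinset_le r (by omega) 0 (List.range (r + 2)).reverse
    have hlen : (List.range (r + 2)).length - 1 = r + 1 := by simp
    have hlen2 : (List.range (r + 2)).reverse.length - 1 = r + 1 := by simp
    erw [hlen, pow_zero, mul_one] at h1
    erw [hlen2, pow_zero, mul_one] at h2
    push_cast at h1 h2
    show ∑ e ∈ CGKE r 1, CGKw r 1 e ≤ _
    rw [CGKE]
    refine (sum_union_le' _ _ _ (CGKw_nonneg r 1)).trans ?_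
    refine (add_le_add h1 h2).trans ?_
    norm_num
    linarith
  | k+1 => by
    have hr1 : 1 ≤ r := by omega
    have ih := CGKE_sum_le r hr k
    show ∑ e ∈ CGKE r (k+2), CGKw r (k+2) e ≤ _
    rw [CGKE]
    have hA : ∑ e ∈ (Finset.range r).biUnion
        (fun j => (CGKE r (k + 1)).image (fun e => (Sum.inl (j, e.1), Sum.inl (j, e.2)))),
        CGKw r (k+2) e ≤ (r:ℝ) * (2 * ((k:ℝ)+1) * ((r:ℝ)+1) * (r:ℝ)^k) := by
      refine (sum_biUnion_le' _ _ _ (CGKw_nonneg r (k+2))).trans ?_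
      have hj : ∀ j ∈ Finset.range r,
          ∑ e ∈ (CGKE r (k + 1)).image
            (fun e => ((Sum.inl (j, e.1) : CGKV (k+2)), Sum.inl (j, e.2))),
            CGKw r (k+2) e ≤ 2 * ((k:ℝ)+1) * ((r:ℝ)+1) * (r:ℝ)^k := by
        intro j _
        erw [Finset.sum_image (by
          intro x _ y _ hxy
          simp only [Prod.mk.injEq, Sum.inl.injEq, Prod.mk.injEq] at hxy
          exact Prod.ext hxy.1.2 hxy.2.2)]
        have : ∀ e ∈ CGKE r (k+1),
            CGKw r (k+2) ((Sum.inl (j, e.1) : CGKV (k+2)), Sum.inl (j, e.2)) =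
            CGKw r (k+1) e := by
          intro e _
          simp [CGKw]
        erw [Finset.sum_congr rfl this]
        exact ih
      calc ∑ j ∈ Finset.range r, ∑ e ∈ (CGKE r (k + 1)).image
            (fun e => ((Sum.inl (j, e.1) : CGKV (k+2)), Sum.inl (j, e.2))), CGKw r (k+2) e
          ≤ ∑ _j ∈ Finset.range r, 2 * ((k:ℝ)+1) * ((r:ℝ)+1) * (r:ℝ)^k :=
            Finset.sum_le_sum hj
        _ = (r:ℝ) * (2 * ((k:ℝ)+1) * ((r:ℝ)+1) * (r:ℝ)^k) := by
            rw [Finset.sum_const, Finset.card_range, nsmul_eq_mul]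
    have hB : ∑ e ∈ (dSteps (Sum.inr 0 ::
        ((List.range r).map (fun j => (Sum.inl (j, CGKsrc r (k + 1)) : CGKV (k+2)))) ++
        [Sum.inr 1])).toFinset, CGKw r (k+2) e ≤ ((r:ℝ)+1) * (r:ℝ)^(k+1) := by
      refine (sum_dSteps_toFinset_le r hr1 (k+1) _).trans (le_of_eq ?_)
      have hlen : ((Sum.inr 0 : CGKV (k+2)) ::
          ((List.range r).map (fun j => (Sum.inl (j, CGKsrc r (k + 1)) : CGKV (k+2)))) ++
          [Sum.inr 1]).length - 1 = r + 1 := by simp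
      erw [hlen]; push_cast; ring
    have hC : ∑ e ∈ (dSteps (Sum.inr 1 ::
        (((List.range r).map
          (fun j => (Sum.inl (j, CGKsnk r (k + 1)) : CGKV (k+2)))).reverse) ++
        [Sum.inr 0])).toFinset, CGKw r (k+2) e ≤ ((r:ℝ)+1) * (r:ℝ)^(k+1) := by
      refine (sum_dSteps_toFinset_le r hr1 (k+1) _).trans (le_of_eq ?_)
      have hlen : ((Sum.inr 1 : CGKV (k+2)) ::
          (((List.range r).map
            (fun j => (Sum.inl (j, CGKsnk r (k + 1)) : CGKV (k+2)))).reverse) ++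
          [Sum.inr 0]).length - 1 = r + 1 := by simp
      erw [hlen]; push_cast; ring
    have hfin : (r:ℝ) * (2 * ((k:ℝ)+1) * ((r:ℝ)+1) * (r:ℝ)^k) +
        ((r:ℝ)+1) * (r:ℝ)^(k+1) + ((r:ℝ)+1) * (r:ℝ)^(k+1) =
        2 * (((k+1:ℕ):ℝ)+1) * ((r:ℝ)+1) * (r:ℝ)^(k+1) := by
      rw [pow_succ]; push_cast; ring
    refine (sum_union_le' _ _ _ (CGKw_nonneg r (k+2))).trans ?_
    refine (add_le_add (sum_union_le' _ _ _ (CGKw_nonneg r (k+2))) le_rfl).trans ?_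
    exact (add_le_add (add_le_add hA hB) hC).trans (le_of_eq hfin)

private lemma range_reverse_tail : ∀ m : ℕ, ∃ t : List ℕ,
    (List.range (m+2)).reverse = t ++ [1, 0]
  | 0 => ⟨[], by decide⟩
  | m+1 => by
    obtain ⟨t, h⟩ := range_reverse_tail m
    refine ⟨(m+2) :: t, ?_⟩
    rw [List.range_succ, List.reverse_append, h]
    rfl

private lemma src_edges (r : ℕ) (hr : 2 ≤ r) : ∀ k : ℕ,
    (CGKsrc r (k+1), Lv1 r (k+1)) ∈ CGKE r (k+1) ∧
    (Lv4 r (k+1), CGKsrc r (k+1)) ∈ CGKE r (k+1) ∧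
    (CGKsrc r (k+1), Lv1 r (k+1)) ≠ (Lv4 r (k+1), CGKsrc r (k+1)) ∧
    CGKw r (k+1) (CGKsrc r (k+1), Lv1 r (k+1)) = (r:ℝ)^k ∧
    CGKw r (k+1) (Lv4 r (k+1), CGKsrc r (k+1)) = (r:ℝ)^k
  | 0 => by
    obtain ⟨r', rfl⟩ : ∃ r', r = r' + 2 := ⟨r - 2, by omega⟩
    refine ⟨?_, ?_, ?_, ?_, ?_⟩
    · show ((0:ℕ), (1:ℕ)) ∈ CGKE (r'+2) 1
      rw [CGKE]
      apply Finset.mem_union_left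
      rw [List.mem_toFinset]
      have h1 : List.range (r' + 2 + 2) = 0 :: 1 :: (List.range (r' + 2)).map
          (Nat.succ ∘ Nat.succ) := by
        rw [List.range_succ_eq_map, List.range_succ_eq_map]
        simp [List.map_map]
      rw [h1]
      exact mem_dSteps_head _ _ _
    · show ((1:ℕ), (0:ℕ)) ∈ CGKE (r'+2) 1
      rw [CGKE]
      apply Finset.mem_union_right
      rw [List.mem_toFinset]
      obtain ⟨t, h⟩ := range_reverse_tail (r' + 2)
      rw [h]
      exact mem_dSteps_last _ _ _
    · show ((0:ℕ), (1:ℕ)) ≠ ((1:ℕ), (0:ℕ))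
      simp
    · show CGKw (r'+2) 1 _ = _
      simp [CGKw]
    · show CGKw (r'+2) 1 _ = _
      simp [CGKw]
  | k+1 => by
    obtain ⟨r', rfl⟩ : ∃ r', r = r' + 1 := ⟨r - 1, by omega⟩
    refine ⟨?_, ?_, ?_, ?_, ?_⟩
    · show ((Sum.inr 0 : CGKV (k+2)), Sum.inl (0, CGKsrc (r'+1) (k+1))) ∈ CGKE (r'+1) (k+2)
      rw [CGKE]
      apply Finset.mem_union_left
      apply Finset.mem_union_right
      erw [List.mem_toFinset]
      have h1 : (List.range (r' + 1)).map
          (fun j => (Sum.inl (j, CGKsrc (r'+1) (k + 1)) : CGKV (k+2))) =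
          Sum.inl (0, CGKsrc (r'+1) (k + 1)) :: (List.range r').map
            (fun j => (Sum.inl (j+1, CGKsrc (r'+1) (k + 1)) : CGKV (k+2))) := by
        rw [List.range_succ_eq_map]
        simp [List.map_map, Function.comp]
      rw [h1]
      erw [List.cons_append, List.cons_append]
      exact mem_dSteps_head _ _ _
    · show ((Sum.inl (0, CGKsnk (r'+1) (k+1)) : CGKV (k+2)), Sum.inr 0) ∈ CGKE (r'+1) (k+2)
      rw [CGKE]
      apply Finset.mem_union_right
      erw [List.mem_toFinset]
      have h1 : (List.range (r' + 1)).map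
          (fun j => (Sum.inl (j, CGKsnk (r'+1) (k + 1)) : CGKV (k+2))) =
          Sum.inl (0, CGKsnk (r'+1) (k + 1)) :: (List.range r').map
            (fun j => (Sum.inl (j+1, CGKsnk (r'+1) (k + 1)) : CGKV (k+2))) := by
        rw [List.range_succ_eq_map]
        simp [List.map_map, Function.comp]
      have h2 : ((Sum.inr 1 : CGKV (k+2)) ::
          ((List.range (r'+1)).map
            (fun j => (Sum.inl (j, CGKsnk (r'+1) (k + 1)) : CGKV (k+2)))).reverse) ++
            [Sum.inr 0] =
          (Sum.inr 1 :: ((List.range r').map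
            (fun j => (Sum.inl (j+1, CGKsnk (r'+1) (k + 1)) : CGKV (k+2)))).reverse) ++
          [Sum.inl (0, CGKsnk (r'+1) (k + 1)), Sum.inr 0] := by
        rw [h1]
        simp
      erw [h2]
      exact mem_dSteps_last _ _ _
    · intro h
      have := congrArg Prod.fst h
      simp only [CGKsrc, Lv4] at this
      simp at this
    · show CGKw (r'+1) (k+2) ((Sum.inr 0 : CGKV (k+2)), Sum.inl (0, CGKsrc (r'+1) (k+1))) = _
      rfl
    · show CGKw (r'+1) (k+2) ((Sum.inl (0, CGKsnk (r'+1) (k+1)) : CGKV (k+2)), Sum.inr 0) = _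
      rfl

theorem stmt10 (k r : ℕ) (hk : 1 ≤ k) (hr : 2 ≤ r) :
    ∑ e ∈ LE r k, CGKw r k e ≤ 2 * (k : ℝ) * ((r : ℝ) + 1) * (r : ℝ) ^ (k - 1) := by
  obtain ⟨k', rfl⟩ : ∃ k', k = k' + 1 := ⟨k - 1, by omega⟩
  set K := k' + 1 with hK
  obtain ⟨he1, he2, hne, hw1, hw2⟩ := src_edges r hr k'
  set e1 := (CGKsrc r K, Lv1 r K) with he1d
  set e2 := (Lv4 r K, CGKsrc r K) with he2d
  set p1 := (Lv2 r K, Lv1 r K) with hp1d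
  set p2 := (Lv4 r K, Lv3 r K) with hp2d
  have hnn := CGKw_nonneg r K
  have hr1 : 1 ≤ r := by omega
  -- bound on the filtered part
  have hsub : (CGKE r K).filter (fun e =>
      e.1 ≠ CGKsrc r K ∧ e.1 ≠ CGKsnk r K ∧ e.2 ≠ CGKsrc r K ∧ e.2 ≠ CGKsnk r K) ⊆
      CGKE r K \ {e1, e2} := by
    intro x hx
    rw [Finset.mem_filter] at hx
    rw [Finset.mem_sdiff]
    refine ⟨hx.1, ?_⟩
    intro hmem
    rcases Finset.mem_insert.mp hmem with h | h
    · exact hx.2.1 (by rw [h])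
    · rw [Finset.mem_singleton] at h
      exact hx.2.2.2.1 (by rw [h])
  have hpair : {e1, e2} ⊆ CGKE r K := by
    intro x hx
    rcases Finset.mem_insert.mp hx with h | h
    · rw [h]; exact he1
    · rw [Finset.mem_singleton] at h; rw [h]; exact he2
  have hsdiff : ∑ e ∈ CGKE r K \ {e1, e2}, CGKw r K e =
      ∑ e ∈ CGKE r K, CGKw r K e - ((r:ℝ)^k' + (r:ℝ)^k') := by
    rw [Finset.sum_sdiff_eq_sub hpair, Finset.sum_pair hne, hw1, hw2]
  have hfilt : ∑ e ∈ (CGKE r K).filter (fun e =>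
      e.1 ≠ CGKsrc r K ∧ e.1 ≠ CGKsnk r K ∧ e.2 ≠ CGKsrc r K ∧ e.2 ≠ CGKsnk r K),
      CGKw r K e ≤ ∑ e ∈ CGKE r K, CGKw r K e - ((r:ℝ)^k' + (r:ℝ)^k') := by
    rw [← hsdiff]
    exact Finset.sum_le_sum_of_subset_of_nonneg hsub (fun e _ _ => hnn e)
  -- bound on the two added edges
  have hnewpair : ∑ e ∈ ({p1, p2} : Finset (CGKV K × CGKV K)), CGKw r K e ≤
      (r:ℝ)^k' + (r:ℝ)^k' := by
    have b1 : CGKw r K p1 ≤ (r:ℝ)^k' := CGKw_le r hr1 k' p1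
    have b2 : CGKw r K p2 ≤ (r:ℝ)^k' := CGKw_le r hr1 k' p2
    by_cases h : p1 = p2
    · rw [h]
      simp only [Finset.insert_eq_self.mpr (Finset.mem_singleton_self p2),
        Finset.sum_singleton]
      have := hnn p1
      rw [h] at this
      linarith
    · rw [Finset.sum_pair h]
      linarith
  -- combine
  have htot : ∑ e ∈ LE r K, CGKw r K e ≤ ∑ e ∈ CGKE r K, CGKw r K e := by
    rw [LE]
    refine (sum_union_le' _ _ _ hnn).trans ?_
    linarith
  have hfin := CGKE_sum_le r hr k'
  have hgoal : ((k' + 1 : ℕ) : ℝ) = (k' : ℝ) + 1 := by push_cast; ring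
  calc ∑ e ∈ LE r K, CGKw r K e ≤ ∑ e ∈ CGKE r K, CGKw r K e := htot
    _ ≤ 2 * ((k':ℝ)+1) * ((r:ℝ)+1) * (r:ℝ)^k' := hfin
    _ = 2 * ((k' + 1 : ℕ) : ℝ) * ((r : ℝ) + 1) * (r : ℝ) ^ (k' + 1 - 1) := by
        rw [hgoal, Nat.add_sub_cancel]

end TSPGap
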